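/- If F : D → D is a σ-semilinear endomorphism of D = Z_q^{2g} (Z_q = W(F_q)) that is p-autodual with respect to the standard symplectic form ω (i.e., there exists a σ^{−1}-semilinear V with FV = VF = p and ω(Fx,y) = σ(ω(x,Vy))), then the image F(D) contains pD, has index q^g in D, and F(D)/pD is a maximal isotropic subspace of the symplectic F_q-vector space D/pD. -/

import Mathlib

open WittVector

/-- The standard symplectic form on `R^{2g} = (Fin g ⊕ Fin g) → R`. -/
def stdForm (R : Type*) [CommRing R] (g : ℕ) (x y : (Fin g ⊕ Fin g) → R) : R :=
  ∑ i : Fin g, (x (Sum.inl i) * y (Sum.inr i) - x (Sum.inr i) * y (Sum.inl i))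

section auxx
variable {R S : Type*} [CommRing R] [CommRing S] {g : ℕ}

lemma stdForm_map (f : R →+* S) (x y : (Fin g ⊕ Fin g) → R) :
    f (stdForm R g x y) = stdForm S g (fun i => f (x i)) (fun i => f (y i)) := by
  simp [stdForm, map_sum, map_sub, map_mul]

lemma stdForm_add_left (x x' y : (Fin g ⊕ Fin g) → R) :
    stdForm R g (x + x') y = stdForm R g x y + stdForm R g x' y := by
  simp only [stdForm, Pi.add_apply, ← Finset.sum_add_distrib]
  exact Finset.sum_congr rfl fun i _ => by ring

lemma stdForm_add_right (x y y' : (Fin g ⊕ Fin g) → R) :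
    stdForm R g x (y + y') = stdForm R g x y + stdForm R g x y' := by
  simp only [stdForm, Pi.add_apply, ← Finset.sum_add_distrib]
  exact Finset.sum_congr rfl fun i _ => by ring

lemma stdForm_smul_left (c : R) (x y : (Fin g ⊕ Fin g) → R) :
    stdForm R g (c • x) y = c * stdForm R g x y := by
  simp only [stdForm, Pi.smul_apply, smul_eq_mul, Finset.mul_sum]
  exact Finset.sum_congr rfl fun i _ => by ring

lemma stdForm_smul_right (c : R) (x y : (Fin g ⊕ Fin g) → R) :
    stdForm R g x (c • y) = c * stdForm R g x y := by
  simp only [stdForm, Pi.smul_apply, smul_eq_mul, Finset.mul_sum]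
  exact Finset.sum_congr rfl fun i _ => by ring

lemma stdForm_self (x : (Fin g ⊕ Fin g) → R) : stdForm R g x x = 0 := by
  simp [stdForm, mul_comm]

end auxx

/-- `stdForm` as a bilinear form. -/
noncomputable def stdBilin (K : Type*) [CommRing K] (g : ℕ) :
    LinearMap.BilinForm K ((Fin g ⊕ Fin g) → K) :=
  LinearMap.mk₂ K (stdForm K g) stdForm_add_left
    (fun c x y => stdForm_smul_left c x y) stdForm_add_right
    (fun c x y => stdForm_smul_right c x y)

lemma stdBilin_apply (K : Type*) [CommRing K] (g : ℕ) (x y : (Fin g ⊕ Fin g) → K) :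
    stdBilin K g x y = stdForm K g x y := rfl

lemma stdBilin_isAlt (K : Type*) [CommRing K] (g : ℕ) : (stdBilin K g).IsAlt :=
  fun x => stdForm_self x

lemma stdBilin_nondeg (K : Type*) [Field K] (g : ℕ) : (stdBilin K g).Nondegenerate := by
  refine (LinearMap.IsRefl.nondegenerate_iff_separatingLeft (stdBilin_isAlt K g).isRefl).2 ?_
  intro x hx
  funext i
  cases i with
  | inl i =>
    have := hx (Pi.single (Sum.inr i) 1)
    simpa [stdBilin_apply, stdForm, Pi.single_apply, Sum.inr.injEq] using this
  | inr i =>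
    have := hx (Pi.single (Sum.inl i) 1)
    simp only [stdBilin_apply, stdForm, Pi.single_apply] at this
    simpa [Sum.inl.injEq] using this

/-- key Witt vector divisibility lemma -/
lemma witt_p_dvd_of_coeff_zero {p : ℕ} [hp : Fact p.Prime] {k : Type*} [CommRing k] [CharP k p]
    [PerfectRing k p] {x : WittVector p k} (hx : x.coeff 0 = 0) :
    ∃ y : WittVector p k, (p : WittVector p k) * y = x := by
  refine ⟨(frobeniusEquiv p k).symm (WittVector.mk p fun n => x.coeff (n + 1)), ?_⟩
  have h1 : WittVector.verschiebung
      (frobenius ((frobeniusEquiv p k).symm (WittVector.mk p fun n => x.coeff (n + 1)))) = x := by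
    rw [show frobenius ((frobeniusEquiv p k).symm (WittVector.mk p fun n => x.coeff (n + 1)))
        = WittVector.mk p fun n => x.coeff (n + 1) from
      (frobeniusEquiv p k).apply_symm_apply _]
    ext n
    cases n with
    | zero => rw [WittVector.verschiebung_coeff_zero, hx]
    | succ n => rw [WittVector.verschiebung_coeff_succ]; rfl
  calc (p : WittVector p k) * _ = WittVector.verschiebung
        (frobenius ((frobeniusEquiv p k).symm (WittVector.mk p fun n => x.coeff (n + 1)))) := by
        rw [WittVector.verschiebung_frobenius, mul_comm]
    _ = x := h1

/-- If `F : D → D` is a `σ`-semilinear endomorphism of `D = Z_q^{2g}` (`Z_q = W(F_q)`, `σ` the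
Witt vector Frobenius) which is `p`-autodual for the standard symplectic form `ω` (i.e. there
is a `σ⁻¹`-semilinear `V` with `FV = VF = p` and `ω(Fx,y) = σ(ω(x,Vy))`), then `F(D) ⊇ pD`,
`F(D)` has index `q^g` in `D`, and `F(D)/pD` is isotropic — hence, having `F_q`-dimension `g`,
a maximal isotropic subspace of the symplectic `F_q`-vector space `D/pD`. -/
theorem stmt17 (p : ℕ) [hp : Fact p.Prime] (k : Type*) [Field k] [Fintype k] [CharP k p]
    [PerfectRing k p] (g : ℕ)
    (F : ((Fin g ⊕ Fin g) → WittVector p k) →ₛₗ[((frobeniusEquiv p k : WittVector p k ≃+* WittVector p k) : WittVector p k →+* WittVector p k)]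
      ((Fin g ⊕ Fin g) → WittVector p k))
    (V : ((Fin g ⊕ Fin g) → WittVector p k) →ₛₗ[(((frobeniusEquiv p k).symm : WittVector p k ≃+* WittVector p k) : WittVector p k →+* WittVector p k)]
      ((Fin g ⊕ Fin g) → WittVector p k))
    (hFV : ∀ x, F (V x) = p • x) (hVF : ∀ x, V (F x) = p • x)
    (hω : ∀ x y, stdForm (WittVector p k) g (F x) y =
      frobeniusEquiv p k (stdForm (WittVector p k) g x (V y))) :
    (∀ x, ∃ y, F y = p • x) ∧
    AddSubgroup.index (AddMonoidHom.range F.toAddMonoidHom) = Fintype.card k ^ g ∧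
    (∀ x y, ∃ c : WittVector p k, stdForm (WittVector p k) g (F x) (F y) = p * c) := by
  classical
  set r : WittVector p k →+* k := WittVector.constantCoeff with hrdef
  have hr : ∀ x : WittVector p k, r x = x.coeff 0 := fun _ => rfl
  have hrp : r (p : WittVector p k) = 0 := by
    rw [hr]; exact WittVector.coeff_p_zero p k
  have hp0 : (p : WittVector p k) ≠ 0 := WittVector.p_nonzero p k
  have hsm : ∀ x : (Fin g ⊕ Fin g) → WittVector p k, p • x = (p : WittVector p k) • x :=
    fun x => (Nat.cast_smul_eq_nsmul (WittVector p k) p x).symm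
  -- injectivity
  have hFinj : Function.Injective F := by
    intro a b hab
    have h1 : (p : WittVector p k) • a = (p : WittVector p k) • b := by
      rw [← hsm a, ← hsm b, ← hVF a, ← hVF b, hab]
    funext i
    have h2 := congrFun h1 i
    simp only [Pi.smul_apply, smul_eq_mul] at h2
    exact mul_left_cancel₀ hp0 h2
  have hVinj : Function.Injective V := by
    intro a b hab
    have h1 : (p : WittVector p k) • a = (p : WittVector p k) • b := by
      rw [← hsm a, ← hsm b, ← hFV a, ← hFV b, hab]
    funext i
    have h2 := congrFun h1 i
    simp only [Pi.smul_apply, smul_eq_mul] at h2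
    exact mul_left_cancel₀ hp0 h2
  -- reduction maps
  set ρ : ((Fin g ⊕ Fin g) → WittVector p k) →+* ((Fin g ⊕ Fin g) → k) :=
    Pi.ringHom (fun i => r.comp (Pi.evalRingHom (fun _ => WittVector p k) i)) with hρdef
  have hρ : ∀ x i, ρ x i = r (x i) := fun x i => rfl
  set fF : ((Fin g ⊕ Fin g) → WittVector p k) →+ ((Fin g ⊕ Fin g) → k) :=
    ρ.toAddMonoidHom.comp F.toAddMonoidHom with hfFdef
  set fV : ((Fin g ⊕ Fin g) → WittVector p k) →+ ((Fin g ⊕ Fin g) → k) :=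
    ρ.toAddMonoidHom.comp V.toAddMonoidHom with hfVdef
  have hfF : ∀ x i, fF x i = r (F x i) := fun x i => rfl
  have hfV : ∀ x i, fV x i = r (V x i) := fun x i => rfl
  -- divisibility
  have hdiv : ∀ x : (Fin g ⊕ Fin g) → WittVector p k, (∀ i, r (x i) = 0) →
      ∃ y, (p : WittVector p k) • y = x := by
    intro x hx
    choose y hy using fun i => witt_p_dvd_of_coeff_zero (x := x i) (by rw [← hr]; exact hx i)
    exact ⟨y, funext fun i => by simpa [Pi.smul_apply, smul_eq_mul] using hy i⟩
  -- kernels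
  have hkerF : ∀ x, fF x = 0 ↔ x ∈ Set.range V := by
    intro x
    constructor
    · intro hx
      obtain ⟨y, hy⟩ := hdiv (F x) (fun i => congrFun hx i)
      have h2 : F (V y) = F x := by rw [hFV y, hsm, hy]
      exact ⟨y, hFinj h2⟩
    · rintro ⟨y, rfl⟩
      have h2 : F (V y) = (p : WittVector p k) • y := by rw [hFV y, hsm]
      funext i
      show r (F (V y) i) = 0
      rw [h2]
      simp [Pi.smul_apply, smul_eq_mul, map_mul, hrp]
  have hkerV : ∀ x, fV x = 0 ↔ x ∈ Set.range F := by
    intro x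
    constructor
    · intro hx
      obtain ⟨y, hy⟩ := hdiv (V x) (fun i => congrFun hx i)
      have h2 : V (F y) = V x := by rw [hVF y, hsm, hy]
      exact ⟨y, hVinj h2⟩
    · rintro ⟨y, rfl⟩
      have h2 : V (F y) = (p : WittVector p k) • y := by rw [hVF y, hsm]
      funext i
      show r (V (F y) i) = 0
      rw [h2]
      simp [Pi.smul_apply, smul_eq_mul, map_mul, hrp]
  -- index of range F equals card of range fV
  have hkerV' : fV.ker = AddMonoidHom.range F.toAddMonoidHom := by
    ext x
    rw [AddMonoidHom.mem_ker, hkerV x]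
    rfl
  have hidx1 : (AddMonoidHom.range F.toAddMonoidHom).index = Nat.card fV.range := by
    rw [← hkerV']
    exact AddSubgroup.index_ker fV
  -- product formula
  have hρsurj : Function.Surjective ρ := by
    intro z
    refine ⟨fun i => WittVector.teichmuller p (z i), funext fun i => ?_⟩
    rw [hρ, hr]
    exact WittVector.teichmuller_coeff_zero p (z i)
  have hPd_index : (ρ.toAddMonoidHom.ker).index = Fintype.card k ^ (g + g) := by
    rw [AddSubgroup.index_ker]
    have htop : ρ.toAddMonoidHom.range = ⊤ :=
      AddMonoidHom.range_eq_top.2 hρsurj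
    rw [htop]
    rw [Nat.card_congr AddSubgroup.topEquiv.toEquiv, Nat.card_eq_fintype_card,
      Fintype.card_fun]
    congr 1
    simp
  have hle : ρ.toAddMonoidHom.ker ≤ AddMonoidHom.range F.toAddMonoidHom := by
    intro x hx
    have hx' : ∀ i, r (x i) = 0 := fun i => congrFun (AddMonoidHom.mem_ker.1 hx) i
    obtain ⟨y, hy⟩ := hdiv x hx'
    exact ⟨V y, by rw [show F.toAddMonoidHom (V y) = F (V y) from rfl, hFV y, hsm, hy]⟩
  have hmul : Nat.card fF.range * (AddMonoidHom.range F.toAddMonoidHom).index =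
      Fintype.card k ^ (g + g) := by
    rw [← hPd_index, ← AddSubgroup.relIndex_mul_index hle, AddSubgroup.relIndex_ker,
      AddMonoidHom.map_range]
  -- submodule structures on the images
  have hsmulF : ∀ (c : k) (a : (Fin g ⊕ Fin g) → WittVector p k),
      fF (((frobeniusEquiv p k).symm (WittVector.teichmuller p c)) • a) = c • fF a := by
    intro c a
    funext i
    have h2 : F (((frobeniusEquiv p k).symm (WittVector.teichmuller p c)) • a)
        = (WittVector.teichmuller p c) • F a := by
      rw [F.map_smulₛₗ]
      congr 1
      exact (frobeniusEquiv p k).apply_symm_apply _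
    show r (F (((frobeniusEquiv p k).symm (WittVector.teichmuller p c)) • a) i) = c • fF a i
    rw [h2]
    simp only [Pi.smul_apply, smul_eq_mul, map_mul, hfF]
    rw [hr (WittVector.teichmuller p c), WittVector.teichmuller_coeff_zero]
  have hsmulV : ∀ (c : k) (a : (Fin g ⊕ Fin g) → WittVector p k),
      fV (((frobeniusEquiv p k) (WittVector.teichmuller p c)) • a) = c • fV a := by
    intro c a
    funext i
    have h2 : V (((frobeniusEquiv p k) (WittVector.teichmuller p c)) • a)
        = (WittVector.teichmuller p c) • V a := by
      rw [V.map_smulₛₗ]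
      congr 1
      exact (frobeniusEquiv p k).symm_apply_apply _
    show r (V (((frobeniusEquiv p k) (WittVector.teichmuller p c)) • a) i) = c • fV a i
    rw [h2]
    simp only [Pi.smul_apply, smul_eq_mul, map_mul, hfV]
    rw [hr (WittVector.teichmuller p c), WittVector.teichmuller_coeff_zero]
  set Wsub : Submodule k ((Fin g ⊕ Fin g) → k) :=
    { carrier := Set.range fF
      add_mem' := by rintro _ _ ⟨a, rfl⟩ ⟨b, rfl⟩; exact ⟨a + b, map_add fF a b⟩
      zero_mem' := ⟨0, map_zero fF⟩
      smul_mem' := by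
        rintro c _ ⟨a, rfl⟩
        exact ⟨((frobeniusEquiv p k).symm (WittVector.teichmuller p c)) • a, hsmulF c a⟩ } with hWsub
  set Usub : Submodule k ((Fin g ⊕ Fin g) → k) :=
    { carrier := Set.range fV
      add_mem' := by rintro _ _ ⟨a, rfl⟩ ⟨b, rfl⟩; exact ⟨a + b, map_add fV a b⟩
      zero_mem' := ⟨0, map_zero fV⟩
      smul_mem' := by
        rintro c _ ⟨a, rfl⟩
        exact ⟨((frobeniusEquiv p k) (WittVector.teichmuller p c)) • a, hsmulV c a⟩ } with hUsub
  -- the symplectic identities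
  have hFF : ∀ x y, stdForm (WittVector p k) g (F x) (F y)
      = (p : WittVector p k) * (frobeniusEquiv p k) (stdForm (WittVector p k) g x y) := by
    intro x y
    rw [hω x (F y), hVF y, hsm, stdForm_smul_right, map_mul, map_natCast]
  have hVV : ∀ x y, stdForm (WittVector p k) g (V x) (V y)
      = (p : WittVector p k) * (frobeniusEquiv p k).symm (stdForm (WittVector p k) g x y) := by
    intro x y
    have h1 := hω (V x) y
    rw [hFV x, hsm, stdForm_smul_left] at h1
    have h2 := congrArg (frobeniusEquiv p k).symm h1.symm
    rw [(frobeniusEquiv p k).symm_apply_apply, map_mul, map_natCast] at h2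
    exact h2
  -- isotropy
  have hWiso : ∀ x ∈ Wsub, ∀ y ∈ Wsub, stdBilin k g x y = 0 := by
    rintro _ ⟨a, rfl⟩ _ ⟨b, rfl⟩
    have h1 : fF a = fun i => r (F a i) := rfl
    have h2 : fF b = fun i => r (F b i) := rfl
    rw [stdBilin_apply, h1, h2, ← stdForm_map r, hFF, map_mul, hrp, zero_mul]
  have hUiso : ∀ x ∈ Usub, ∀ y ∈ Usub, stdBilin k g x y = 0 := by
    rintro _ ⟨a, rfl⟩ _ ⟨b, rfl⟩
    have h1 : fV a = fun i => r (V a i) := rfl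
    have h2 : fV b = fun i => r (V b i) := rfl
    rw [stdBilin_apply, h1, h2, ← stdForm_map r, hVV, map_mul, hrp, zero_mul]
  -- finrank bound for isotropic subspaces
  have hfinDb : Module.finrank k ((Fin g ⊕ Fin g) → k) = g + g := by
    rw [Module.finrank_pi]
    simp
  have hdim : ∀ (W : Submodule k ((Fin g ⊕ Fin g) → k)),
      (∀ x ∈ W, ∀ y ∈ W, stdBilin k g x y = 0) → Module.finrank k W ≤ g := by
    intro W hiso
    have hle2 : W ≤ (stdBilin k g).orthogonal W := fun x hx =>
      (LinearMap.BilinForm.mem_orthogonal_iff).2 fun n hn => hiso n hn x hx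
    have h1 := Submodule.finrank_mono hle2
    have h2 := LinearMap.BilinForm.finrank_orthogonal (stdBilin_nondeg k g)
      W
    have h3 := Submodule.finrank_le W
    rw [hfinDb] at h2 h3
    omega
  -- cardinalities
  have hcard : ∀ (W : Submodule k ((Fin g ⊕ Fin g) → k)),
      (∀ x ∈ W, ∀ y ∈ W, stdBilin k g x y = 0) → Nat.card W ≤ Fintype.card k ^ g := by
    intro W hiso
    haveI : Fintype ↥W := Fintype.ofFinite _
    rw [Nat.card_eq_fintype_card, Module.card_eq_pow_finrank (K := k) (V := ↥W)]
    exact Nat.pow_le_pow_right Fintype.card_pos (hdim W hiso)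
  have hWcard : Nat.card fF.range = Nat.card Wsub :=
    Nat.card_congr (Equiv.subtypeEquivRight (fun x => Iff.rfl))
  have hUcard : Nat.card fV.range = Nat.card Usub :=
    Nat.card_congr (Equiv.subtypeEquivRight (fun x => Iff.rfl))
  -- final arithmetic
  have hWle : Nat.card fF.range ≤ Fintype.card k ^ g := hWcard ▸ hcard Wsub hWiso
  have hUle : Nat.card fV.range ≤ Fintype.card k ^ g := hUcard ▸ hcard Usub hUiso
  have hqpos : 0 < Fintype.card k ^ g := pow_pos Fintype.card_pos g
  have hidx : (AddMonoidHom.range F.toAddMonoidHom).index = Fintype.card k ^ g := by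
    rw [hidx1]
    have hmul' : Nat.card fF.range * Nat.card fV.range
        = Fintype.card k ^ g * Fintype.card k ^ g := by
      rw [← pow_add, ← hmul, hidx1]
    have h4 : Fintype.card k ^ g * Fintype.card k ^ g ≤ Fintype.card k ^ g * Nat.card fV.range := by
      calc Fintype.card k ^ g * Fintype.card k ^ g
          = Nat.card fF.range * Nat.card fV.range := hmul'.symm
        _ ≤ Fintype.card k ^ g * Nat.card fV.range :=
            Nat.mul_le_mul_right _ hWle
    have h5 : Fintype.card k ^ g ≤ Nat.card fV.range :=
      Nat.le_of_mul_le_mul_left h4 hqpos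
    exact le_antisymm hUle h5
  refine ⟨fun x => ⟨V x, hFV x⟩, hidx, fun x y => ⟨(frobeniusEquiv p k) (stdForm (WittVector p k) g x y), hFF x y⟩⟩
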